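/- arXiv:1101.1490 — 2 statements merged into one kernel-verified Lean document; each statement's English description precedes it below -/
import Mathlib

section
/- Let φ be the morphism φ(A) = A^p B, φ(B) = A^q B with p > q ≥ 1, and let u_β = lim φ^n(A) be its fixed point. Let U_n = |φ^n(A)|. If n has normal U-representation (d_N, …, d_1, d_0), i.e., n = Σ_{j=0}^N d_j U_j via the greedy algorithm, then the prefix of u_β of length n equals (φ^N(A))^{d_N} (φ^{N-1}(A))^{d_{N-1}} ⋯ (φ(A))^{d_1} A^{d_0}, and the number of B's in this prefix is Σ_{j=1}^N d_j U_{j-1}. -/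
/-- Number of occurrences of the letter `A` (encoded as `false`). -/
def countA (w : List Bool) : ℕ := w.count false

/-- Number of occurrences of the letter `B` (encoded as `true`). -/
def countB (w : List Bool) : ℕ := w.count true

/-- Extension of a morphism (given on letters) to finite words. -/
def applyM (φ : Bool → List Bool) (w : List Bool) : List Bool := (w.map φ).flatten

/-- `w` is a factor of the infinite word `u`. -/
def IsFactor (u : ℕ → Bool) (w : List Bool) : Prop :=
  ∃ i, w = (List.range w.length).map (fun j => u (i + j))

/-- The prefix of length `n` of the infinite word `u`. -/
def prefWord (u : ℕ → Bool) (n : ℕ) : List Bool := (List.range n).map u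

/-- The finite word `w` is a prefix of the infinite word `u`. -/
def IsPrefixOf (w : List Bool) (u : ℕ → Bool) : Prop := w = prefWord u w.length

/-- Abelian complexity: number of Parikh vectors of factors of length `n`. -/
noncomputable def AC (u : ℕ → Bool) (n : ℕ) : ℕ :=
  Set.ncard {P : ℕ × ℕ | ∃ w, IsFactor u w ∧ w.length = n ∧ P = (countA w, countB w)}

/-- `n`-fold iterate of the morphism `φ` applied to the letter `a`. -/
def iterW (φ : Bool → List Bool) (n : ℕ) (a : Bool) : List Bool := (applyM φ)^[n] [a]

/-- The morphism `A ↦ AᵖB, B ↦ A^q` (simple Parry case). -/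
def simpleM (p q : ℕ) : Bool → List Bool
  | false => List.replicate p false ++ [true]
  | true  => List.replicate q false

/-- The morphism `A ↦ AᵖB, B ↦ A^qB` (non-simple Parry case). -/
def nonsimpleM (p q : ℕ) : Bool → List Bool
  | false => List.replicate p false ++ [true]
  | true  => List.replicate q false ++ [true]

/-- Greedy digits `(d_N, …, d_0)` of `x` in the base given by `U`
    (assuming `U 0 = 1`): `d_j = ⌊x_j / U_j⌋`, `x_{j-1} = x_j mod U_j`. -/
def gdigits (U : ℕ → ℕ) : ℕ → ℕ → List ℕ
  | 0, x => [x]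
  | j+1, x => x / U (j+1) :: gdigits U j (x % U (j+1))

/-- The digit `d_j` of the normal `U`-representation `(d_N, …, d_0)` of `n`. -/
def dig (U : ℕ → ℕ) (N n j : ℕ) : ℕ := (gdigits U N n).getD (N - j) 0

/-- The words `w⁽ⁿ⁾` of the non-simple Parry case: `w⁽⁰⁾ = B`, `w⁽ⁿ⁾ = B·φ(w⁽ⁿ⁻¹⁾)`. -/
def wNon (φ : Bool → List Bool) : ℕ → List Bool
  | 0 => [true]
  | n+1 => true :: applyM φ (wNon φ n)

/-- The words `w⁽ᴺ⁾ = B·φ(A^{q-1})·φ³(A^{q-1})⋯φ^{2N-1}(A^{q-1})` of the simple Parry case. -/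
def wSim (φ : Bool → List Bool) (q : ℕ) (N : ℕ) : List Bool :=
  true :: ((List.range N).map
    (fun k => (applyM φ)^[2*k+1] (List.replicate (q-1) false))).flatten

-- basic morphism lemmas
lemma pf7_applyM_append (φ : Bool → List Bool) (u v : List Bool) :
    applyM φ (u ++ v) = applyM φ u ++ applyM φ v := by
  simp [applyM]

lemma pf7_iter_append (φ : Bool → List Bool) (n : ℕ) (u v : List Bool) :
    (applyM φ)^[n] (u ++ v) = (applyM φ)^[n] u ++ (applyM φ)^[n] v := by
  induction n generalizing u v with
  | zero => simp
  | succ k ih => simp [Function.iterate_succ_apply, pf7_applyM_append, ih]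

lemma pf7_iter_nil (φ : Bool → List Bool) (n : ℕ) : (applyM φ)^[n] ([] : List Bool) = [] := by
  induction n with
  | zero => rfl
  | succ k ih => simp [Function.iterate_succ_apply, applyM, ih]

lemma pf7_iter_replicate (φ : Bool → List Bool) (n k : ℕ) (a : Bool) :
    (applyM φ)^[n] (List.replicate k a) = (List.replicate k ((applyM φ)^[n] [a])).flatten := by
  induction k with
  | zero => simp [pf7_iter_nil]
  | succ m ih =>
      rw [List.replicate_succ, show (a :: List.replicate m a) = [a] ++ List.replicate m a from rfl,
        pf7_iter_append, ih]
      simp [List.replicate_succ]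

lemma pf7_iterW_false (p q N : ℕ) :
    iterW (nonsimpleM p q) (N+1) false =
      (List.replicate p (iterW (nonsimpleM p q) N false)).flatten ++ iterW (nonsimpleM p q) N true := by
  unfold iterW
  rw [Function.iterate_succ_apply]
  have h : applyM (nonsimpleM p q) [false] = List.replicate p false ++ [true] := by
    simp [applyM, nonsimpleM]
  rw [h, pf7_iter_append, pf7_iter_replicate]

lemma pf7_iterW_true (p q N : ℕ) :
    iterW (nonsimpleM p q) (N+1) true =
      (List.replicate q (iterW (nonsimpleM p q) N false)).flatten ++ iterW (nonsimpleM p q) N true := by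
  unfold iterW
  rw [Function.iterate_succ_apply]
  have h : applyM (nonsimpleM p q) [true] = List.replicate q false ++ [true] := by
    simp [applyM, nonsimpleM]
  rw [h, pf7_iter_append, pf7_iter_replicate]

lemma pf7_join_rep_len (d : ℕ) (w : List Bool) :
    (List.replicate d w).flatten.length = d * w.length := by
  induction d with
  | zero => simp
  | succ m ih => simp [List.replicate_succ, ih]; ring

lemma pf7_lenF (p q N : ℕ) :
    (iterW (nonsimpleM p q) (N+1) false).length =
      p * (iterW (nonsimpleM p q) N false).length + (iterW (nonsimpleM p q) N true).length := by
  rw [pf7_iterW_false]; simp [pf7_join_rep_len]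

lemma pf7_lenT (p q N : ℕ) :
    (iterW (nonsimpleM p q) (N+1) true).length =
      q * (iterW (nonsimpleM p q) N false).length + (iterW (nonsimpleM p q) N true).length := by
  rw [pf7_iterW_true]; simp [pf7_join_rep_len]

lemma pf7_lenT_pos (p q m : ℕ) : 0 < (iterW (nonsimpleM p q) m true).length := by
  induction m with
  | zero => simp [iterW]
  | succ k ih => rw [pf7_lenT]; omega

lemma pf7_lenF_pos (p q m : ℕ) : 0 < (iterW (nonsimpleM p q) m false).length := by
  cases m with
  | zero => simp [iterW]
  | succ k => rw [pf7_lenF]; have := pf7_lenT_pos p q k; omega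

lemma pf7_lenT_le (p q m : ℕ) (hpq : q ≤ p) :
    (iterW (nonsimpleM p q) m true).length ≤ (iterW (nonsimpleM p q) m false).length := by
  cases m with
  | zero => simp [iterW]
  | succ k =>
      rw [pf7_lenF, pf7_lenT]
      have := Nat.mul_le_mul_right (iterW (nonsimpleM p q) k false).length hpq
      omega

/-- The greedy prefix word. -/
def Gw (φ : Bool → List Bool) : ℕ → ℕ → List Bool
  | 0, x => List.replicate x false
  | j+1, x => (List.replicate (x / (iterW φ (j+1) false).length) (iterW φ (j+1) false)).flatten
      ++ Gw φ j (x % (iterW φ (j+1) false).length)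

lemma pf7_Gw_len (φ : Bool → List Bool) : ∀ N x, (Gw φ N x).length = x := by
  intro N
  induction N with
  | zero => intro x; simp [Gw]
  | succ j ih =>
      intro x
      simp only [Gw, List.length_append, pf7_join_rep_len, ih]
      exact Nat.div_add_mod' x _

lemma pf7_join_rep_sing (n : ℕ) (a : Bool) :
    (List.replicate n [a]).flatten = List.replicate n a := by
  induction n with
  | zero => simp
  | succ m ih => simp [List.replicate_succ, ih]

lemma pf7_dig_top (U : ℕ → ℕ) (N x : ℕ) : dig U (N+1) x (N+1) = x / U (N+1) := by
  simp [dig, gdigits]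

lemma pf7_dig_lower (U : ℕ → ℕ) (N x j : ℕ) (hj : j ≤ N) :
    dig U (N+1) x j = dig U N (x % U (N+1)) j := by
  have h : N + 1 - j = (N - j) + 1 := by omega
  simp [dig, gdigits, h]

lemma pf7_countB_join_rep (d : ℕ) (w : List Bool) :
    countB ((List.replicate d w).flatten) = d * countB w := by
  induction d with
  | zero => simp [countB]
  | succ m ih => simp [List.replicate_succ, countB, List.count_append] at *; rw [ih]; ring

lemma pf7_countB_apply (p q : ℕ) (w : List Bool) :
    countB (applyM (nonsimpleM p q) w) = w.length := by
  induction w with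
  | nil => rfl
  | cons a t ih =>
      have h : applyM (nonsimpleM p q) (a :: t)
          = nonsimpleM p q a ++ applyM (nonsimpleM p q) t := by simp [applyM]
      rw [h]
      cases a <;>
        simp [countB, nonsimpleM, List.count_append, List.count_replicate] at * <;> omega

lemma pf7_countB_iterW (p q N : ℕ) :
    countB (iterW (nonsimpleM p q) (N+1) false) = (iterW (nonsimpleM p q) N false).length := by
  unfold iterW
  rw [Function.iterate_succ_apply']
  exact pf7_countB_apply p q _

lemma pf7_countB_Gw (p q : ℕ) (U : ℕ → ℕ)
    (hU : ∀ m, U m = (iterW (nonsimpleM p q) m false).length) :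
    ∀ N x, countB (Gw (nonsimpleM p q) N x) = ∑ j ∈ Finset.Icc 1 N, dig U N x j * U (j-1) := by
  intro N
  induction N with
  | zero => intro x; simp [Gw, countB, List.count_replicate]
  | succ j ih =>
      intro x
      rw [show Gw (nonsimpleM p q) (j+1) x = (List.replicate (x / (iterW (nonsimpleM p q) (j+1) false).length) (iterW (nonsimpleM p q) (j+1) false)).flatten
        ++ Gw (nonsimpleM p q) j (x % (iterW (nonsimpleM p q) (j+1) false).length) from rfl]
      rw [show countB ((List.replicate (x / (iterW (nonsimpleM p q) (j+1) false).length) (iterW (nonsimpleM p q) (j+1) false)).flatten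
        ++ Gw (nonsimpleM p q) j (x % (iterW (nonsimpleM p q) (j+1) false).length))
        = countB ((List.replicate (x / (iterW (nonsimpleM p q) (j+1) false).length) (iterW (nonsimpleM p q) (j+1) false)).flatten)
        + countB (Gw (nonsimpleM p q) j (x % (iterW (nonsimpleM p q) (j+1) false).length)) from List.count_append ..]
      rw [pf7_countB_join_rep, pf7_countB_iterW, ih,
        Finset.sum_Icc_succ_top (by omega : 1 ≤ j + 1)]
      rw [pf7_dig_top, ← hU]
      have hsum : ∑ i ∈ Finset.Icc 1 j, dig U (j+1) x i * U (i-1)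
          = ∑ i ∈ Finset.Icc 1 j, dig U j (x % U (j+1)) i * U (i-1) := by
        apply Finset.sum_congr rfl
        intro i hi
        rw [pf7_dig_lower U j x i (by simp at hi; omega)]
      rw [hsum]
      simp only [hU, Nat.add_sub_cancel]
      ring

lemma pf7_prefix_pow {w s t : List Bool} {d e : ℕ} (hde : d ≤ e)
    (h1 : d < e → s <+: w) (h2 : d = e → s <+: t) :
    (List.replicate d w).flatten ++ s <+: (List.replicate e w).flatten ++ t := by
  rcases eq_or_lt_of_le hde with rfl | hlt
  · exact (List.prefix_append_right_inj _).2 (h2 rfl)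
  · have hsplit : (List.replicate e w).flatten
        = (List.replicate d w).flatten ++ (w ++ (List.replicate (e - d - 1) w).flatten) := by
      conv_lhs => rw [show e = d + (e - d - 1 + 1) by omega]
      simp [List.replicate_add, List.replicate_succ]
    rw [hsplit, List.append_assoc]
    exact (List.prefix_append_right_inj _).2 ((h1 hlt).trans ((List.prefix_append w _).trans (List.prefix_append _ t)))

lemma pf7_Gw_prefix (p q : ℕ) (hpq : q ≤ p) : ∀ N : ℕ,
    (∀ x, x < (iterW (nonsimpleM p q) (N+1) false).length →
      Gw (nonsimpleM p q) N x <+: iterW (nonsimpleM p q) (N+1) false) ∧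
    (∀ x, x < (iterW (nonsimpleM p q) (N+1) true).length →
      Gw (nonsimpleM p q) N x <+: iterW (nonsimpleM p q) (N+1) true) := by
  intro N
  induction N with
  | zero =>
      constructor
      · intro x hx
        rw [pf7_lenF] at hx
        simp [iterW] at hx
        rw [pf7_iterW_false]
        show List.replicate x false <+: _
        have h1 : List.replicate x false <+: (List.replicate p (iterW (nonsimpleM p q) 0 false)).flatten := by
          show List.replicate x false <+: (List.replicate p [false]).flatten
          rw [pf7_join_rep_sing]
          rw [show List.replicate x false = (List.replicate p false).take x by
            rw [List.take_replicate]; congr 1; omega]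
          exact List.take_prefix _ _
        exact h1.trans (List.prefix_append _ _)
      · intro x hx
        rw [pf7_lenT] at hx
        simp [iterW] at hx
        rw [pf7_iterW_true]
        show List.replicate x false <+: _
        have h1 : List.replicate x false <+: (List.replicate q (iterW (nonsimpleM p q) 0 false)).flatten := by
          show List.replicate x false <+: (List.replicate q [false]).flatten
          rw [pf7_join_rep_sing]
          rw [show List.replicate x false = (List.replicate q false).take x by
            rw [List.take_replicate]; congr 1; omega]
          exact List.take_prefix _ _
        exact h1.trans (List.prefix_append _ _)
  | succ N ih =>
      set L := (iterW (nonsimpleM p q) (N+1) false).length with hL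
      set LB := (iterW (nonsimpleM p q) (N+1) true).length with hLB
      have hLpos : 0 < L := pf7_lenF_pos p q (N+1)
      have hLBle : LB ≤ L := pf7_lenT_le p q (N+1) hpq
      constructor
      · intro x hx
        rw [pf7_lenF, ← hL, ← hLB] at hx
        have hxd : x / L * L ≤ x := Nat.div_mul_le_self x L
        have hmod := Nat.div_add_mod' x L
        have hdp : x / L ≤ p := by
          by_contra hcon
          push_neg at hcon
          have h2 : (p+1) * L ≤ x / L * L := Nat.mul_le_mul_right L hcon
          nlinarith
        rw [pf7_iterW_false]
        show (List.replicate (x / L) (iterW (nonsimpleM p q) (N+1) false)).flatten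
            ++ Gw (nonsimpleM p q) N (x % L) <+: _
        apply pf7_prefix_pow hdp
        · intro _
          exact ih.1 _ (Nat.mod_lt x hLpos)
        · intro hdeq
          apply ih.2
          have : x / L * L = p * L := by rw [hdeq]
          omega
      · intro x hx
        rw [pf7_lenT, ← hL, ← hLB] at hx
        have hxd : x / L * L ≤ x := Nat.div_mul_le_self x L
        have hmod := Nat.div_add_mod' x L
        have hdq : x / L ≤ q := by
          by_contra hcon
          push_neg at hcon
          have h2 : (q+1) * L ≤ x / L * L := Nat.mul_le_mul_right L hcon
          nlinarith
        rw [pf7_iterW_true]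
        show (List.replicate (x / L) (iterW (nonsimpleM p q) (N+1) false)).flatten
            ++ Gw (nonsimpleM p q) N (x % L) <+: _
        apply pf7_prefix_pow hdq
        · intro _
          exact ih.1 _ (Nat.mod_lt x hLpos)
        · intro hdeq
          apply ih.2
          have : x / L * L = q * L := by rw [hdeq]
          omega

lemma pf7_join_eq_Gw (p q : ℕ) (U : ℕ → ℕ)
    (hU : ∀ m, U m = (iterW (nonsimpleM p q) m false).length) :
    ∀ N x, ((List.range (N+1)).reverse.map
        (fun j => (List.replicate (dig U N x j) (iterW (nonsimpleM p q) j false)).flatten)).flatten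
      = Gw (nonsimpleM p q) N x := by
  intro N
  induction N with
  | zero =>
      intro x
      have h0 : dig U 0 x 0 = x := by simp [dig, gdigits]
      rw [show List.range 1 = [0] from rfl]
      simp [Gw, h0, pf7_join_rep_sing, iterW]
  | succ N ih =>
      intro x
      rw [List.range_succ, List.reverse_append]
      simp only [List.reverse_singleton, List.singleton_append, List.map_cons, List.flatten_cons]
      have hmap : List.map
            (fun j => (List.replicate (dig U (N+1) x j) (iterW (nonsimpleM p q) j false)).flatten)
            (List.range (N+1)).reverse
          = List.map
            (fun j => (List.replicate (dig U N (x % U (N+1)) j) (iterW (nonsimpleM p q) j false)).flatten)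
            (List.range (N+1)).reverse := by
        apply List.map_congr_left
        intro j hj
        rw [List.mem_reverse, List.mem_range] at hj
        rw [pf7_dig_lower U N x j (by omega)]
      rw [hmap]
      have ih' : (List.map (fun j => (List.replicate (dig U N (x % U (N+1)) j)
            (iterW (nonsimpleM p q) j false)).flatten)
          (List.range (N+1)).reverse).flatten = Gw (nonsimpleM p q) N (x % U (N+1)) := ih _
      rw [ih', pf7_dig_top, hU (N+1)]
      rfl

lemma pf7_pref_take (ub : ℕ → Bool) (M n : ℕ) (h : n ≤ M) :
    (prefWord ub M).take n = prefWord ub n := by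
  unfold prefWord
  rw [← List.map_take, List.take_range, Nat.min_eq_left h]


/-- prefix structure of the fixed point `u_β` (non-simple case) via the
normal `U`-representation, and the `B`-count of prefixes. -/
theorem stmt7 (p q : ℕ) (hq : 1 ≤ q) (hpq : q < p)
    (φ : Bool → List Bool) (hφ : φ = nonsimpleM p q)
    (ub : ℕ → Bool) (hub : ∀ m, IsPrefixOf (iterW φ m false) ub)
    (U : ℕ → ℕ) (hU : ∀ m, U m = (iterW φ m false).length)
    (n N : ℕ) (hn : 0 < n) (hnN : n < U (N+1)) :
    prefWord ub n =
      ((List.range (N+1)).reverse.map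
        (fun j => (List.replicate (dig U N n j) (iterW φ j false)).flatten)).flatten ∧
    countB (prefWord ub n) = ∑ j ∈ Finset.Icc 1 N, dig U N n j * U (j-1) := by
  subst hφ
  have hnlen : n < (iterW (nonsimpleM p q) (N+1) false).length := by rw [← hU]; exact hnN
  have hjoin := pf7_join_eq_Gw p q U hU N n
  have hpre : Gw (nonsimpleM p q) N n <+: iterW (nonsimpleM p q) (N+1) false :=
    (pf7_Gw_prefix p q (le_of_lt hpq) N).1 n hnlen
  have hlen : (Gw (nonsimpleM p q) N n).length = n := pf7_Gw_len _ N n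
  have hub' := hub (N+1)
  unfold IsPrefixOf at hub'
  have hGpref : Gw (nonsimpleM p q) N n = prefWord ub n := by
    have h1 := List.prefix_iff_eq_take.1 hpre
    rw [hlen, hub', pf7_pref_take _ _ _ (le_of_lt hnlen)] at h1
    exact h1
  constructor
  · rw [hjoin, hGpref]
  · rw [← hGpref, pf7_countB_Gw p q U hU N n]
end

section
/- Let φ be the morphism φ(A) = A^p B, φ(B) = A^q with p ≥ q > 1, and U_n = |φ^n(A)|. Define w^(N) = B·φ(A^{q-1})·φ^3(A^{q-1})⋯φ^{2N-1}(A^{q-1}) and v^(N) = φ(w^(N)). Then for all j ≥ 0: U_{2j} ≤ |v^(j)| < U_{2j+1} ≤ |w^(j+1)| < U_{2j+2}. -/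
lemma applyM_append (φ : Bool → List Bool) (a b : List Bool) :
    applyM φ (a ++ b) = applyM φ a ++ applyM φ b := by
  simp [applyM]

lemma iter_append (φ : Bool → List Bool) (n : ℕ) (a b : List Bool) :
    (applyM φ)^[n] (a ++ b) = (applyM φ)^[n] a ++ (applyM φ)^[n] b := by
  induction n generalizing a b with
  | zero => simp
  | succ n ih => simp [Function.iterate_succ_apply, applyM_append, ih]

lemma iter_replicate_len (φ : Bool → List Bool) (n m : ℕ) (c : Bool) :
    ((applyM φ)^[n] (List.replicate m c)).length
      = m * ((applyM φ)^[n] [c]).length := by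
  induction m with
  | zero => simp [show (List.replicate 0 c) = ([] : List Bool) from rfl,
      show ((applyM φ)^[n] []) = [] from by
        induction n with
        | zero => rfl
        | succ n ih => simp [Function.iterate_succ_apply, applyM, ih]]
  | succ m ih =>
      have : List.replicate (m+1) c = [c] ++ List.replicate m c := by
        simp [List.replicate_succ]
      rw [this, iter_append]
      simp [ih]; ring

/-- `U_{2j} ≤ |v⁽ʲ⁾| < U_{2j+1} ≤ |w⁽ʲ⁺¹⁾| < U_{2j+2}` (simple case). -/
theorem stmt13 (p q : ℕ) (hq : 1 < q) (hpq : q ≤ p)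
    (φ : Bool → List Bool) (hφ : φ = simpleM p q)
    (U : ℕ → ℕ) (hU : ∀ m, U m = (iterW φ m false).length)
    (j : ℕ) :
    U (2*j) ≤ (applyM φ (wSim φ q j)).length ∧
    (applyM φ (wSim φ q j)).length < U (2*j+1) ∧
    U (2*j+1) ≤ (wSim φ q (j+1)).length ∧
    (wSim φ q (j+1)).length < U (2*j+2) := by
  subst hφ
  have hlenU : ∀ n, ((applyM (simpleM p q))^[n] [false]).length = U n :=
    fun n => (hU n).symm
  have hU0 : U 0 = 1 := by simp [hU, iterW]
  have hBlen : ∀ n, ((applyM (simpleM p q))^[n+1] [true]).length = q * U n := by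
    intro n
    have h1 : applyM (simpleM p q) [true] = List.replicate q false := by
      simp [applyM, simpleM]
    rw [Function.iterate_succ_apply, h1, iter_replicate_len, hlenU]
  have hUrec : ∀ n, U (n+1) = p * U n + ((applyM (simpleM p q))^[n] [true]).length := by
    intro n
    have h1 : applyM (simpleM p q) [false] = List.replicate p false ++ [true] := by
      simp [applyM, simpleM]
    rw [hU, iterW, Function.iterate_succ_apply, h1, iter_append,
      List.length_append, iter_replicate_len, hlenU]
  have hUrec2 : ∀ n, U (n+2) = p * U (n+1) + q * U n := by
    intro n
    rw [hUrec (n+1), hBlen n]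
  have hU1 : U 1 = p + 1 := by rw [hUrec 0, hU0]; simp
  have hUpos : ∀ n, 1 ≤ U n := by
    intro n
    induction n using Nat.strong_induction_on with
    | _ n ih =>
      match n with
      | 0 => omega
      | 1 => omega
      | n+2 =>
          have := ih n (by omega)
          have := hUrec2 n
          nlinarith
  have hwsucc : ∀ N, wSim (simpleM p q) q (N+1)
      = wSim (simpleM p q) q N ++ (applyM (simpleM p q))^[2*N+1] (List.replicate (q-1) false) := by
    intro N
    simp [wSim, List.range_succ]
  have hWlen : ∀ N, (wSim (simpleM p q) q (N+1)).length
      = (wSim (simpleM p q) q N).length + (q-1) * U (2*N+1) := by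
    intro N
    rw [hwsucc, List.length_append, iter_replicate_len, hlenU]
  have hVlen : ∀ N, (applyM (simpleM p q) (wSim (simpleM p q) q (N+1))).length
      = (applyM (simpleM p q) (wSim (simpleM p q) q N)).length + (q-1) * U (2*N+2) := by
    intro N
    rw [hwsucc, applyM_append, List.length_append,
      ← Function.iterate_succ_apply' (applyM (simpleM p q)) (2*N+1),
      iter_replicate_len, hlenU]
  have hW0 : (wSim (simpleM p q) q 0).length = 1 := by simp [wSim]
  have hV0 : (applyM (simpleM p q) (wSim (simpleM p q) q 0)).length = q := by
    simp [wSim, applyM, simpleM]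
  have ha : ∀ n, U n ≤ (q-1) * U n := fun n => Nat.le_mul_of_pos_left _ (by omega)
  have hb : ∀ n, U n ≤ q * U n := fun n => Nat.le_mul_of_pos_left _ (by omega)
  have hc : ∀ n, (q-1) * U n + U n ≤ p * U n := by
    intro n
    have := Nat.mul_le_mul_right (U n) (show q-1+1 ≤ p by omega)
    rwa [Nat.add_mul, Nat.one_mul] at this
  induction j with
  | zero =>
      have hU0' : U (2*0) = 1 := hU0
      have hU1' : U (2*0+1) = p + 1 := hU1
      have h2 : U (2*0+2) = p * U (2*0+1) + q := by
        rw [hUrec2, hU0', Nat.mul_one]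
      have h3 := hWlen 0
      have h4 := ha (2*0+1)
      have h5 := hc (2*0+1)
      have h6 := hUpos (2*0+1)
      rw [hV0]
      refine ⟨by omega, by omega, by omega, by omega⟩
  | succ j ih =>
      obtain ⟨ih1, ih2, ih3, ih4⟩ := ih
      have e1 : 2*(j+1) = 2*j+2 := by ring
      rw [e1, hVlen j]
      have c1 : 2*j+2+1 = 2*j+3 := by ring
      have c2 : 2*j+2+2 = 2*j+4 := by ring
      rw [c1, c2, hWlen (j+1)]
      have c3 : 2*(j+1)+1 = 2*j+3 := by ring
      rw [c3]
      have r3 : U (2*j+3) = p * U (2*j+2) + q * U (2*j+1) := by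
        rw [show 2*j+3 = 2*j+1+2 from by ring]; exact hUrec2 _
      have r4 : U (2*j+4) = p * U (2*j+3) + q * U (2*j+2) := by
        rw [show 2*j+4 = 2*j+2+2 from by ring]; exact hUrec2 _
      have p1 := hUpos (2*j+1)
      have p2 := hUpos (2*j+2)
      have p3 := hUpos (2*j+3)
      have m1 := ha (2*j+2)
      have m2 := ha (2*j+3)
      have m3 := hb (2*j+1)
      have m4 := hb (2*j+2)
      have m5 := hc (2*j+2)
      have m6 := hc (2*j+3)
      refine ⟨by omega, by omega, by omega, by omega⟩
end
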